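/- Let G be a finite group and H, K subgroups of G such that H is not contained in K. Then for every function d from the set of left cosets of H in G to the set of left cosets of K in G, the number of elements g ∈ G with g ∈ d(gH) is at most |G|/2. Equivalently: for g uniformly distributed on G, any decoder that observes the coset gH and outputs a guess for the coset gK errs with probability at least 1/2. -/

import Mathlib

open scoped Classical

/-- **Claim 2.** Let `G` be a finite group and `H`, `K` subgroups with `H ⊄ K`. Then any
decoder `d` from left cosets of `H` to left cosets of `K` is correct (`g ∈ d(gH)`, i.e.
`d(gH) = gK`) on at most half of the elements `g ∈ G`: for `g` uniform on `G`, the decoder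
errs with probability at least `1/2`. -/
theorem decoder_fails_half_of_not_le
    {G : Type*} [Group G] [Fintype G] (H K : Subgroup G) (hHK : ¬ H ≤ K)
    (d : G ⧸ H → G ⧸ K) :
    2 * (Finset.univ.filter fun g : G =>
        d (QuotientGroup.mk g) = (QuotientGroup.mk g : G ⧸ K)).card ≤ Fintype.card G := by
  obtain ⟨h, hH, hK⟩ := SetLike.not_le_iff_exists.mp hHK
  set P := fun g : G => d (QuotientGroup.mk g) = (QuotientGroup.mk g : G ⧸ K) with hP
  have key : (Finset.univ.filter P).card ≤ (Finset.univ.filter fun g => ¬ P g).card := by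
    apply Finset.card_le_card_of_injOn (fun g => g * h)
    · intro g hg
      simp only [hP, Finset.mem_coe, Finset.mem_filter, Finset.mem_univ, true_and] at hg ⊢
      intro hcon
      have h1 : (QuotientGroup.mk (g * h) : G ⧸ H) = QuotientGroup.mk g :=
        QuotientGroup.mk_mul_of_mem g hH
      rw [h1, hg] at hcon
      have h2 : g⁻¹ * (g * h) ∈ K := QuotientGroup.eq.mp hcon
      rw [inv_mul_cancel_left] at h2
      exact hK h2
    · intro a _ b _ hab
      exact mul_right_cancel hab
  have hsum : (Finset.univ.filter P).card + (Finset.univ.filter fun g => ¬ P g).card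
      = Fintype.card G := by
    rw [Finset.card_filter_add_card_filter_not]
    rfl
  have : 2 * (Finset.univ.filter P).card ≤ Fintype.card G := by omega
  exact this
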